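/- Fix d ≥ 2. There exist constants C(d) and r₀(d) depending only on d with the following property. Let K̄ be an algebraically closed field, m ≥ 1, r ≥ r₀(d), and set n := ⌈4(r + m^{2/d})⌉ (so that n^d > m² + r(n^{d−1}+n)). Then for every choice of proper nonempty subsets I₁,…,I_r of [d], there exists a nonzero polynomial F of degree D, with coefficients in the prime field of K̄ and log₂ D ≤ C(d)·log₂(r+m), in the standard coordinates on ((K̄ⁿ)^{⊗d})^m, such that F vanishes at every tuple of the form g·(t₁,…,t_{m−1}, Σ_{i=1}^r a_i ⊗ b_i), where g ∈ K̄^{m×m}, t₁,…,t_{m−1} ∈ (K̄ⁿ)^{⊗d}, a_i ∈ (K̄ⁿ)^{⊗I_i}, b_i ∈ (K̄ⁿ)^{⊗I_i^c}, and where g· means taking, in the j-th position, the linear combination of the m listed tensors with coefficients given by the j-th row of g. -/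

import Mathlib

set_option linter.unusedSectionVars false

open PiTensorProduct
open scoped TensorProduct

section PartitionRank

variable (F : Type*) [Field F] {d : ℕ} (W : Fin d → Type*)
  [∀ i, AddCommGroup (W i)] [∀ i, Module F (W i)]

/-- Combine a family indexed by `I` and a family indexed by the complement of `I`
into a family indexed by `Fin d`. -/
def combineVec (I : Finset (Fin d)) (v : ∀ i : {x : Fin d // x ∈ I}, W i)
    (w : ∀ i : {x : Fin d // x ∉ I}, W i) : ∀ i, W i :=
  fun i => if h : i ∈ I then v ⟨i, h⟩ else w ⟨i, h⟩

theorem combineVec_update_right (I : Finset (Fin d)) {instd : DecidableEq (Fin d)}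
    {insts : DecidableEq {x : Fin d // x ∉ I}} (v : ∀ i : {x : Fin d // x ∈ I}, W i)
    (w : ∀ i : {x : Fin d // x ∉ I}, W i) (j : {x : Fin d // x ∉ I}) (x : W j) :
    combineVec W I v (Function.update w j x) =
      Function.update (combineVec W I v w) (j : Fin d) x := by
  obtain ⟨jv, hj⟩ := j
  funext i
  rcases eq_or_ne i jv with rfl | hij
  · simp [combineVec, hj]
  · rw [Function.update_of_ne hij]
    by_cases h : i ∈ I
    · simp [combineVec, h]
    · have hne : (⟨i, h⟩ : {x : Fin d // x ∉ I}) ≠ ⟨jv, hj⟩ := by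
        simpa [Subtype.ext_iff] using hij
      simp [combineVec, h, Function.update_of_ne hne]

theorem combineVec_update_left (I : Finset (Fin d)) {instd : DecidableEq (Fin d)}
    {insts : DecidableEq {x : Fin d // x ∈ I}} (v : ∀ i : {x : Fin d // x ∈ I}, W i)
    (w : ∀ i : {x : Fin d // x ∉ I}, W i) (j : {x : Fin d // x ∈ I}) (x : W j) :
    combineVec W I (Function.update v j x) w =
      Function.update (combineVec W I v w) (j : Fin d) x := by
  obtain ⟨jv, hj⟩ := j
  funext i
  rcases eq_or_ne i jv with rfl | hij
  · simp [combineVec, hj]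
  · rw [Function.update_of_ne hij]
    by_cases h : i ∈ I
    · have hne : (⟨i, h⟩ : {x : Fin d // x ∈ I}) ≠ ⟨jv, hj⟩ := by
        simpa [Subtype.ext_iff] using hij
      simp [combineVec, h, Function.update_of_ne hne]
    · simp [combineVec, h]

/-- The inner multilinear map used to define the partition multiplication. -/
noncomputable def partMulInner (I : Finset (Fin d))
    (v : ∀ i : {x : Fin d // x ∈ I}, W i) :
    MultilinearMap F (fun i : {x : Fin d // x ∉ I} => W i) (⨂[F] i, W i) where
  toFun w := tprod F (combineVec W I v w)
  map_update_add' w j x y := by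
    simp only [combineVec_update_right, MultilinearMap.map_update_add]
  map_update_smul' w j c x := by
    simp only [combineVec_update_right, MultilinearMap.map_update_smul]

/-- The outer multilinear map used to define the partition multiplication. -/
noncomputable def partMulOuter (I : Finset (Fin d)) :
    MultilinearMap F (fun i : {x : Fin d // x ∈ I} => W i)
      ((⨂[F] i : {x : Fin d // x ∉ I}, W i) →ₗ[F] ⨂[F] i, W i) where
  toFun v := PiTensorProduct.lift (partMulInner F W I v)
  map_update_add' v j x y := by
    ext w
    simp [partMulInner, combineVec_update_left, MultilinearMap.map_update_add]
  map_update_smul' v j c x := by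
    ext w
    simp [partMulInner, combineVec_update_left, MultilinearMap.map_update_smul]

/-- The canonical bilinear "partition multiplication"
`V_I ⊗ V_{I^c} → V₁ ⊗ ⋯ ⊗ V_d` realising the canonical isomorphism on pairs. -/
noncomputable def partMul (I : Finset (Fin d)) :
    (⨂[F] i : {x : Fin d // x ∈ I}, W i) →ₗ[F]
      (⨂[F] i : {x : Fin d // x ∉ I}, W i) →ₗ[F] ⨂[F] i, W i :=
  PiTensorProduct.lift (partMulOuter F W I)

/-- Witnesses "partition rank at most `r`": a decomposition `t = Σ_{k=1}^r a_k ⊗ b_k`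
with `a_k ∈ V_{I_k}`, `b_k ∈ V_{I_k^c}` for proper nonempty subsets `I_k ⊂ [d]`. -/
def PrkDecomp (t : ⨂[F] i, W i) (r : ℕ) : Prop :=
  ∃ I : Fin r → Finset (Fin d),
    (∀ k, (I k).Nonempty ∧ I k ≠ Finset.univ) ∧
    ∃ (a : ∀ k, ⨂[F] i : {x : Fin d // x ∈ I k}, W i)
      (b : ∀ k, ⨂[F] i : {x : Fin d // x ∉ I k}, W i),
      t = ∑ k, partMul F W (I k) (a k) (b k)

/-- The partition rank of a tensor. -/
noncomputable def prk (t : ⨂[F] i, W i) : ℕ :=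
  sInf {r | PrkDecomp F W t r}

/-- Witnesses "collective partition rank at most `r`" for a tuple of tensors: some
nonzero linear combination has partition rank at most `r`. -/
def CollectivePrkDecomp {m : ℕ} (t : Fin m → ⨂[F] i, W i) (r : ℕ) : Prop :=
  ∃ c : Fin m → F, c ≠ 0 ∧ PrkDecomp F W (∑ ℓ, c ℓ • t ℓ) r

/-- The collective partition rank of a tuple of tensors. -/
noncomputable def collectivePrk {m : ℕ} (t : Fin m → ⨂[F] i, W i) : ℕ :=
  sInf {r | CollectivePrkDecomp F W t r}

end PartitionRank

section BaseChange

variable (K L : Type*) [Field K] [Field L] [Algebra K L]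
variable {d : ℕ} (W : Fin d → Type*) [∀ i, AddCommGroup (W i)] [∀ i, Module K (W i)]

/-- The canonical `K`-linear map `V₁ ⊗ ⋯ ⊗ V_d → (L ⊗ V₁) ⊗_L ⋯ ⊗_L (L ⊗ V_d)`. -/
noncomputable def tensorBaseChange :
    (⨂[K] i, W i) →ₗ[K] ⨂[L] i, (L ⊗[K] W i) :=
  PiTensorProduct.lift
    (((PiTensorProduct.tprod L (s := fun i => L ⊗[K] W i)).restrictScalars K).compLinearMap
      (fun i => TensorProduct.mk K L (W i) 1))

end BaseChange
section Border

/-- `x` lies in the Zariski closure of `S`: every polynomial function (pulled back along any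
linear map to a coordinate space) that vanishes on `S` vanishes at `x`. -/
def MemZariskiClosure (F : Type*) [CommSemiring F] {W : Type*} [AddCommMonoid W] [Module F W]
    (S : Set W) (x : W) : Prop :=
  ∀ (N : ℕ) (φ : W →ₗ[F] (Fin N → F)) (P : MvPolynomial (Fin N) F),
    (∀ s ∈ S, MvPolynomial.eval (φ s) P = 0) → MvPolynomial.eval (φ x) P = 0

variable (K : Type*) [Field K] {d : ℕ} (W : Fin d → Type*)
  [∀ i, AddCommGroup (W i)] [∀ i, Module K (W i)]

/-- The border partition rank of a tensor: the minimal `r` such that the tensor, viewed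
over the algebraic closure, lies in the Zariski closure of the tensors of partition rank
at most `r`. -/
noncomputable def borderPrk (t : ⨂[K] i, W i) : ℕ :=
  sInf {r | MemZariskiClosure (AlgebraicClosure K)
    {s : ⨂[AlgebraicClosure K] i, (AlgebraicClosure K ⊗[K] W i) |
      PrkDecomp (AlgebraicClosure K) (fun i => AlgebraicClosure K ⊗[K] W i) s r}
    (tensorBaseChange K (AlgebraicClosure K) W t)}

/-- The border collective partition rank of an `m`-tuple of tensors. -/
noncomputable def borderCollectivePrk {m : ℕ} (t : Fin m → ⨂[K] i, W i) : ℕ :=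
  sInf {r | MemZariskiClosure (AlgebraicClosure K)
    {s : Fin m → ⨂[AlgebraicClosure K] i, (AlgebraicClosure K ⊗[K] W i) |
      CollectivePrkDecomp (AlgebraicClosure K) (fun i => AlgebraicClosure K ⊗[K] W i) s r}
    (fun ℓ => tensorBaseChange K (AlgebraicClosure K) W (t ℓ))}

end Border

section PiIota

variable (K : Type*) [Field K] {n : ℕ} {V : Type*} [AddCommGroup V] [Module K V]

/-- The linear form in `K[x₁,…,xₙ]` associated to a vector of `V` via a basis. -/
noncomputable def linearFormOf (b : Module.Basis (Fin n) K V) : V →ₗ[K] MvPolynomial (Fin n) K :=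
  (Finsupp.linearCombination K fun j => (MvPolynomial.X j : MvPolynomial (Fin n) K)) ∘ₗ
    b.repr.toLinearMap

/-- The multiplication map `π : V^{⊗d} → S^d V`, `v₁ ⊗ ⋯ ⊗ v_d ↦ v₁⋯v_d`, where `S^d V` is
realised as the space of degree-`d` forms in `K[x₁,…,xₙ]` via the basis `b`. -/
noncomputable def tensorToPoly (b : Module.Basis (Fin n) K V) (d : ℕ) :
    (⨂[K] _ : Fin d, V) →ₗ[K] MvPolynomial (Fin n) K :=
  PiTensorProduct.lift
    ((MultilinearMap.mkPiAlgebra K (Fin d) (MvPolynomial (Fin n) K)).compLinearMap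
      (fun _ => linearFormOf K b))

/-- The symmetrisation map `ι : S^d V → V^{⊗d}`,
`v₁⋯v_d ↦ Σ_{σ ∈ S_d} v_{σ(1)} ⊗ ⋯ ⊗ v_{σ(d)}`, where `S^d V` is realised as the space of
degree-`d` forms in `K[x₁,…,xₙ]` via the basis `b`. -/
noncomputable def polyToTensor (b : Module.Basis (Fin n) K V) (d : ℕ) :
    MvPolynomial (Fin n) K →ₗ[K] ⨂[K] _ : Fin d, V :=
  ∑ w : Fin d → Fin n,
    (∏ j : Fin n, Nat.factorial ((∑ i : Fin d, Finsupp.single (w i) 1 : Fin n →₀ ℕ) j)) •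
      ((LinearMap.toSpanSingleton K _ (PiTensorProduct.tprod K fun i => b (w i))) ∘ₗ
        (MvPolynomial.lcoeff K (∑ i : Fin d, Finsupp.single (w i) 1)))

end PiIota

section Coords

variable (F : Type*) [Field F]

/-- The standard coordinate on `(Fⁿ)^{⊗d}` indexed by the word `w`, i.e. the coefficient
of the basis vector `e_{w 0} ⊗ ⋯ ⊗ e_{w (d-1)}`. -/
noncomputable def stdCoord (d n : ℕ) (w : Fin d → Fin n) :
    (⨂[F] _ : Fin d, (Fin n → F)) →ₗ[F] F :=
  PiTensorProduct.lift
    ((MultilinearMap.mkPiAlgebra F (Fin d) F).compLinearMap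
      (fun i => LinearMap.proj (w i)))

end Coords




open MvPolynomial

section DegreeWeights

variable {R : Type*} [CommSemiring R] {Θ : Type*} [Fintype Θ]

/-- Weighted degree of an exponent vector. -/
def wdeg (Wt : Θ → ℕ) (μ : Θ →₀ ℕ) : ℕ := ∑ x, Wt x * μ x

theorem wdeg_add (Wt : Θ → ℕ) (μ ν : Θ →₀ ℕ) :
    wdeg Wt (μ + ν) = wdeg Wt μ + wdeg Wt ν := by
  simp [wdeg, mul_add, Finset.sum_add_distrib]

theorem wdeg_single (Wt : Θ → ℕ) [DecidableEq Θ] (x : Θ) (k : ℕ) :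
    wdeg Wt (Finsupp.single x k) = Wt x * k := by
  rw [wdeg, Finset.sum_eq_single x]
  · simp
  · intro y _ hy
    simp [Finsupp.single_apply, Ne.symm hy]
  · simp

/-- All monomials of `p` have `Wt`-weighted degree at most `a`. -/
def WBdd (Wt : Θ → ℕ) (a : ℕ) (p : MvPolynomial Θ R) : Prop :=
  ∀ μ ∈ p.support, wdeg Wt μ ≤ a

theorem WBdd.mono {Wt : Θ → ℕ} {a b : ℕ} {p : MvPolynomial Θ R} (h : WBdd Wt a p)
    (hab : a ≤ b) : WBdd Wt b p := fun μ hμ => le_trans (h μ hμ) hab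

theorem WBdd_zero (Wt : Θ → ℕ) (a : ℕ) : WBdd Wt a (0 : MvPolynomial Θ R) := by
  intro μ hμ
  simp at hμ

theorem WBdd_C (Wt : Θ → ℕ) (a : ℕ) (c : R) : WBdd Wt a (C c : MvPolynomial Θ R) := by
  classical
  intro μ hμ
  rw [MvPolynomial.C_apply] at hμ
  have := MvPolynomial.support_monomial_subset hμ
  simp only [Finset.mem_singleton] at this
  subst this
  simp [wdeg]

theorem WBdd_X (Wt : Θ → ℕ) (x : Θ) : WBdd Wt (Wt x) (X x : MvPolynomial Θ R) := by
  classical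
  intro μ hμ
  rw [MvPolynomial.X] at hμ
  have := MvPolynomial.support_monomial_subset hμ
  simp only [Finset.mem_singleton] at this
  subst this
  rw [wdeg_single]
  simp

theorem WBdd_mul {Wt : Θ → ℕ} {a b : ℕ} {p q : MvPolynomial Θ R} (hp : WBdd Wt a p)
    (hq : WBdd Wt b q) : WBdd Wt (a + b) (p * q) := by
  classical
  intro μ hμ
  have := MvPolynomial.support_mul p q hμ
  rw [Finset.mem_add] at this
  obtain ⟨ν₁, hν₁, ν₂, hν₂, rfl⟩ := this
  rw [wdeg_add]
  exact Nat.add_le_add (hp _ hν₁) (hq _ hν₂)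

theorem WBdd_pow {Wt : Θ → ℕ} {a : ℕ} {p : MvPolynomial Θ R} (hp : WBdd Wt a p) :
    ∀ k : ℕ, WBdd Wt (k * a) (p ^ k)
  | 0 => by
    rw [pow_zero, Nat.zero_mul]
    exact WBdd_C Wt 0 1
  | (k + 1) => by
    rw [pow_succ]
    have := WBdd_mul (WBdd_pow hp k) hp
    simpa [Nat.succ_mul] using this

theorem WBdd_sum {Wt : Θ → ℕ} {a : ℕ} {ι : Type*} {s : Finset ι}
    {f : ι → MvPolynomial Θ R} (h : ∀ i ∈ s, WBdd Wt a (f i)) :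
    WBdd Wt a (∑ i ∈ s, f i) := by
  classical
  induction s using Finset.induction_on with
  | empty => simpa using WBdd_zero Wt a
  | insert _ _ hx ih =>
    rw [Finset.sum_insert hx]
    intro μ hμ
    have := MvPolynomial.support_add hμ
    rw [Finset.mem_union] at this
    rcases this with h1 | h2
    · exact h _ (Finset.mem_insert_self _ _) μ h1
    · exact ih (fun i hi => h i (Finset.mem_insert_of_mem hi)) μ h2

theorem WBdd_prod {Wt : Θ → ℕ} {ι : Type*} {s : Finset ι} {a : ι → ℕ}
    {f : ι → MvPolynomial Θ R} (h : ∀ i ∈ s, WBdd Wt (a i) (f i)) :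
    WBdd Wt (∑ i ∈ s, a i) (∏ i ∈ s, f i) := by
  classical
  induction s using Finset.induction_on with
  | empty => simp only [Finset.sum_empty, Finset.prod_empty]; exact WBdd_C Wt 0 1
  | insert _ _ hx ih =>
    rw [Finset.sum_insert hx, Finset.prod_insert hx]
    exact WBdd_mul (h _ (Finset.mem_insert_self _ _))
      (ih (fun i hi => h i (Finset.mem_insert_of_mem hi)))

theorem WBdd_smul {Wt : Θ → ℕ} {a : ℕ} {c : R} {p : MvPolynomial Θ R} (hp : WBdd Wt a p) :
    WBdd Wt a (c • p) := fun μ hμ => hp μ (MvPolynomial.support_smul hμ)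

end DegreeWeights


section CountingAux

variable {τ : Type*} [Fintype τ] [DecidableEq τ]

def sumLeEquivSumEq (E : ℕ) :
    {f : τ → ℕ // ∑ x, f x ≤ E} ≃ {g : Option τ → ℕ // ∑ o, g o = E} where
  toFun f := ⟨fun o => o.elim (E - ∑ x, f.1 x) f.1, by
    rw [Fintype.sum_option]; exact Nat.sub_add_cancel f.2⟩
  invFun g := ⟨fun x => g.1 (some x), by
    show ∑ x, g.1 (some x) ≤ E
    have := g.2; rw [Fintype.sum_option] at this; omega⟩
  left_inv f := by ext x; rfl
  right_inv g := by
    ext o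
    cases o with
    | none =>
      have := g.2; rw [Fintype.sum_option] at this
      simp only [Option.elim]
      omega
    | some x => rfl

noncomputable def sumEqEquivFinsupp (E : ℕ) :
    {g : Option τ → ℕ // ∑ o, g o = E} ≃ {μ : Option τ →₀ ℕ // μ.sum (fun _ k => k) = E} := by
  refine Equiv.subtypeEquiv (Finsupp.equivFunOnFinite.symm) fun g => ?_
  rw [Finsupp.sum_fintype _ _ (fun _ => rfl)]
  exact Iff.rfl

noncomputable def finsuppEquivSym (α : Type*) [DecidableEq α] (E : ℕ) :
    {μ : α →₀ ℕ // μ.sum (fun _ k => k) = E} ≃ Sym α E where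
  toFun μ := ⟨Finsupp.toMultiset μ.1, by
    rw [Finsupp.card_toMultiset]; exact μ.2⟩
  invFun s := ⟨Multiset.toFinsupp (s : Multiset α), by
    rw [show ((Multiset.toFinsupp (s : Multiset α)).sum fun _ k => k) =
        (Multiset.toFinsupp (s : Multiset α)).sum (fun _ => id) from rfl,
      ← Finsupp.card_toMultiset, Multiset.toFinsupp_toMultiset]
    exact s.2⟩
  left_inv μ := by ext1; simp
  right_inv s := by
    apply Subtype.ext
    show Finsupp.toMultiset (Multiset.toFinsupp (s : Multiset α)) = _
    simp

noncomputable def sumLeEquivSym (E : ℕ) :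
    {f : τ → ℕ // ∑ x, f x ≤ E} ≃ Sym (Option τ) E :=
  (sumLeEquivSumEq E).trans ((sumEqEquivFinsupp E).trans (finsuppEquivSym (Option τ) E))

noncomputable instance fintypeSumLe (E : ℕ) : Fintype {f : τ → ℕ // ∑ x, f x ≤ E} :=
  Fintype.ofEquiv _ (sumLeEquivSym E).symm

theorem card_sumLe (E : ℕ) :
    Fintype.card {f : τ → ℕ // ∑ x, f x ≤ E} =
      (E + Fintype.card τ).choose (Fintype.card τ) := by
  classical
  rw [Fintype.card_congr (sumLeEquivSym E), Sym.card_sym_eq_choose,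
    Fintype.card_option]
  have h1 : Fintype.card τ + 1 + E - 1 = Fintype.card τ + E := by omega
  rw [h1, Nat.add_comm (Fintype.card τ) E, Nat.choose_symm_add]

theorem card_sumLe_le_pow (E : ℕ) :
    Fintype.card {f : τ → ℕ // ∑ x, f x ≤ E} ≤ (E + 1) ^ Fintype.card τ := by
  classical
  have : Fintype.card {f : τ → ℕ // ∑ x, f x ≤ E} ≤ Fintype.card (τ → Fin (E + 1)) := by
    apply Fintype.card_le_of_injective
      (fun f => fun x => ⟨f.1 x, Nat.lt_succ_of_le (le_trans
        (Finset.single_le_sum (fun i _ => Nat.zero_le _) (Finset.mem_univ x)) f.2)⟩)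
    intro f g h
    ext x
    exact congrArg Fin.val (congrFun h x)
  simpa using this

end CountingAux

section ChooseLemmas

theorem choose_add_le_pow'' (E k : ℕ) : (E + k).choose k ≤ (E + 1) ^ k := by
  classical
  have h1 := card_sumLe (τ := Fin k) E
  have h2 := card_sumLe_le_pow (τ := Fin k) E
  rw [Fintype.card_fin] at h1 h2
  rw [← h1]
  exact h2

theorem pow_mul_choose_le (D S Mt : ℕ) (hD : 3 * S * S ≤ D) :
    ∀ q, Mt + q ≤ S → (3 * S) ^ q * (D + Mt).choose Mt ≤ (D + (Mt + q)).choose (Mt + q)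
  | 0, _ => by simp
  | (q+1), h => by
    have ih := pow_mul_choose_le D S Mt hD q (by omega)
    have hid := Nat.add_one_mul_choose_eq (D + (Mt + q)) (Mt + q)
    have hstep : 3 * S * ((D + (Mt + q)).choose (Mt + q)) ≤
        (D + (Mt + (q + 1))).choose (Mt + (q + 1)) := by
      have hpos : 0 < Mt + q + 1 := Nat.succ_pos _
      have hbig : 3 * S * (Mt + q + 1) ≤ D + (Mt + q) + 1 := by
        calc 3 * S * (Mt + q + 1) ≤ 3 * S * S := by
              exact Nat.mul_le_mul_left _ (by omega)
          _ ≤ D := hD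
          _ ≤ D + (Mt + q) + 1 := by omega
      have : (3 * S * ((D + (Mt + q)).choose (Mt + q))) * (Mt + q + 1) ≤
          ((D + (Mt + (q + 1))).choose (Mt + (q + 1))) * (Mt + q + 1) := by
        calc (3 * S * ((D + (Mt + q)).choose (Mt + q))) * (Mt + q + 1)
            = (3 * S * (Mt + q + 1)) * ((D + (Mt + q)).choose (Mt + q)) := by ring
          _ ≤ (D + (Mt + q) + 1) * ((D + (Mt + q)).choose (Mt + q)) :=
              Nat.mul_le_mul_right _ hbig
          _ = ((D + (Mt + (q + 1))).choose (Mt + (q + 1))) * (Mt + q + 1) := by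
              rw [show D + (Mt + (q + 1)) = D + (Mt + q) + 1 by omega,
                show Mt + (q + 1) = Mt + q + 1 by omega]
              exact Nat.add_one_mul_choose_eq _ _
      exact Nat.le_of_mul_le_mul_right this hpos
    calc (3 * S) ^ (q + 1) * (D + Mt).choose Mt
        = 3 * S * ((3 * S) ^ q * (D + Mt).choose Mt) := by ring
      _ ≤ 3 * S * ((D + (Mt + q)).choose (Mt + q)) := Nat.mul_le_mul_left _ ih
      _ ≤ _ := hstep

theorem main_count (S q Mt B A : ℕ) (hS : S = Mt + q) (hq : 2 * (B + A) < q) (h1 : 1 ≤ S) :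
    (3 * S ^ 2 + B).choose B * ((3 * S ^ 2 + Mt).choose Mt * (2 * (3 * S ^ 2) + A).choose A)
      < (3 * S ^ 2 + S).choose S := by
  set D := 3 * S ^ 2 with hD
  have hDS : 3 * S * S ≤ D := by rw [hD]; ring_nf; omega
  have hc1 : (D + B).choose B ≤ (D + 1) ^ B := choose_add_le_pow'' D B
  have hc3 : (2 * D + A).choose A ≤ (2 * D + 1) ^ A := choose_add_le_pow'' (2 * D) A
  have hpos : 0 < (D + Mt).choose Mt := Nat.choose_pos (by omega)
  have h9 : D + 1 ≤ 9 * S ^ 2 := by rw [hD]; nlinarith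
  have h9' : 2 * D + 1 ≤ 9 * S ^ 2 := by rw [hD]; nlinarith
  have hkey : (D + 1) ^ B * (2 * D + 1) ^ A ≤ (3 * S) ^ (2 * (B + A)) := by
    have : (3 * S) ^ (2 * (B + A)) = (9 * S ^ 2) ^ (B + A) := by
      rw [pow_mul]
      congr 1
      ring
    rw [this, pow_add]
    exact Nat.mul_le_mul (Nat.pow_le_pow_left h9 B) (Nat.pow_le_pow_left h9' A)
  have hstrict : (3 * S) ^ (2 * (B + A)) < (3 * S) ^ q :=
    Nat.pow_lt_pow_right (by omega) hq
  calc (D + B).choose B * ((D + Mt).choose Mt * (2 * D + A).choose A)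
      = ((D + B).choose B * (2 * D + A).choose A) * (D + Mt).choose Mt := by ring
    _ ≤ ((D + 1) ^ B * (2 * D + 1) ^ A) * (D + Mt).choose Mt :=
        Nat.mul_le_mul_right _ (Nat.mul_le_mul hc1 hc3)
    _ ≤ (3 * S) ^ (2 * (B + A)) * (D + Mt).choose Mt := Nat.mul_le_mul_right _ hkey
    _ < (3 * S) ^ q * (D + Mt).choose Mt := (Nat.mul_lt_mul_right hpos).2 hstrict
    _ ≤ (D + (Mt + q)).choose (Mt + q) := pow_mul_choose_le D S Mt hDS q (by omega)
    _ = (D + S).choose S := by rw [← hS]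

end ChooseLemmas



theorem nat_add_le_mul_add_one {x y : ℕ} (hx : 1 ≤ x) (hy : 1 ≤ y) : x + y ≤ x * y + 1 := by
  obtain ⟨a, rfl⟩ : ∃ a, x = a + 1 := ⟨x - 1, by omega⟩
  obtain ⟨b, rfl⟩ : ∃ b, y = b + 1 := ⟨y - 1, by omega⟩
  have h : (a + 1) * (b + 1) = a * b + a + b + 1 := by ring
  have hab : 0 ≤ a * b := Nat.zero_le _
  omega

theorem pow_pair_le (n d c : ℕ) (hn : 1 ≤ n) (h1 : 1 ≤ c) (h2 : c ≤ d - 1) (hd : 2 ≤ d) :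
    n ^ c + n ^ (d - c) ≤ n ^ (d - 1) + n := by
  obtain ⟨j, rfl⟩ : ∃ j, c = j + 1 := ⟨c - 1, by omega⟩
  obtain ⟨i, hi⟩ : ∃ i, d - (j + 1) = i + 1 := ⟨d - j - 2, by omega⟩
  have hd1 : d - 1 = j + i + 1 := by omega
  rw [hi, hd1]
  have hx : 1 ≤ n ^ j := Nat.one_le_pow _ _ (by omega)
  have hy : 1 ≤ n ^ i := Nat.one_le_pow _ _ (by omega)
  have hxy : n ^ j + n ^ i ≤ n ^ j * n ^ i + 1 := nat_add_le_mul_add_one hx hy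
  calc n ^ (j + 1) + n ^ (i + 1) = (n ^ j + n ^ i) * n := by
        rw [pow_succ, pow_succ]; ring
    _ ≤ (n ^ j * n ^ i + 1) * n := Nat.mul_le_mul_right _ hxy
    _ = n ^ (j + i + 1) + n := by rw [pow_succ, pow_add]; ring

set_option maxHeartbeats 1000000 in
theorem geom_ineq (d m r n : ℕ) (hd : 2 ≤ d) (hm : 1 ≤ m) (hr : 1 ≤ r)
    (hn : 4 * ((r : ℝ) + (m : ℝ) ^ ((2 : ℝ) / (d : ℝ))) ≤ (n : ℝ))
    (I : Fin r → Finset (Fin d)) (hI : ∀ k, (I k).Nonempty ∧ I k ≠ Finset.univ) :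
    2 * (m * m + ∑ k : Fin r, (n ^ (I k).card + n ^ (d - (I k).card))) < n ^ d := by
  have hdR : (0 : ℝ) < (d : ℝ) := by positivity
  set μ : ℝ := (m : ℝ) ^ ((2 : ℝ) / (d : ℝ)) with hμ
  have hμ1 : 1 ≤ μ := Real.one_le_rpow (by exact_mod_cast hm) (by positivity)
  have hrR : (1 : ℝ) ≤ (r : ℝ) := by exact_mod_cast hr
  have hn8 : (8 : ℝ) ≤ (n : ℝ) := by linarith
  have hn1 : 1 ≤ n := by exact_mod_cast le_trans (by norm_num : (1:ℝ) ≤ 8) hn8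
  -- bound the sum
  have hA : ∑ k : Fin r, (n ^ (I k).card + n ^ (d - (I k).card)) ≤
      r * (n ^ (d - 1) + n) := by
    calc ∑ k : Fin r, (n ^ (I k).card + n ^ (d - (I k).card))
        ≤ ∑ _k : Fin r, (n ^ (d - 1) + n) := by
          refine Finset.sum_le_sum fun k _ => ?_
          have hc1 : 1 ≤ (I k).card := (hI k).1.card_pos
          have hc2 : (I k).card ≤ d - 1 := by
            have h3 : (I k) ⊂ Finset.univ := Finset.ssubset_univ_iff.mpr (hI k).2
            have h4 := Finset.card_lt_card h3
            simp only [Finset.card_univ, Fintype.card_fin] at h4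
            omega
          exact pow_pair_le n d _ hn1 hc1 hc2 hd
      _ = r * (n ^ (d - 1) + n) := by simp [Finset.sum_const, mul_comm]
  -- the real inequality
  have hmain : 2 * (m * m) + 2 * (r * (n ^ (d - 1) + n)) < n ^ d := by
    have hmm : ((m : ℝ)) * (m : ℝ) = μ ^ d := by
      rw [hμ, ← Real.rpow_natCast ((m : ℝ) ^ ((2 : ℝ) / (d : ℝ))) d,
        ← Real.rpow_mul (Nat.cast_nonneg m)]
      rw [div_mul_cancel₀ (2 : ℝ) (ne_of_gt hdR)]
      rw [show (2 : ℝ) = ((2 : ℕ) : ℝ) by norm_num, Real.rpow_natCast]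
      ring
    rw [← Nat.cast_lt (α := ℝ)]
    push_cast
    set X : ℝ := (n : ℝ) with hX
    have hX1 : (1 : ℝ) ≤ X := by linarith
    have hX0 : (0 : ℝ) ≤ X := by linarith
    have hXpow : X ≤ X ^ (d - 1) := by
      calc X = X ^ 1 := (pow_one X).symm
        _ ≤ X ^ (d - 1) := pow_le_pow_right₀ hX1 (by omega)
    have hXd : X ^ d = X * X ^ (d - 1) := by
      rw [← pow_succ']
      congr 1
      omega
    have h4μ : 4 * μ ≤ X := by rw [hX]; linarith
    have hμ0 : (0 : ℝ) ≤ μ := by linarith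
    have hμpow : 4 * μ ^ (d - 1) ≤ X ^ (d - 1) := by
      have e1 : (4 : ℝ) ≤ 4 ^ (d - 1) := le_self_pow₀ (by norm_num) (by omega)
      have e2 : (4 : ℝ) * μ ^ (d - 1) ≤ 4 ^ (d - 1) * μ ^ (d - 1) :=
        mul_le_mul_of_nonneg_right e1 (pow_nonneg hμ0 _)
      have e3 : (4 : ℝ) ^ (d - 1) * μ ^ (d - 1) = (4 * μ) ^ (d - 1) := (mul_pow _ _ _).symm
      have e4 : (4 * μ) ^ (d - 1) ≤ X ^ (d - 1) :=
        pow_le_pow_left₀ (by positivity) h4μ _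
      linarith
    have hμd : μ ^ d = μ * μ ^ (d - 1) := by
      rw [← pow_succ']
      congr 1
      omega
    have hmm' : (m : ℝ) * (m : ℝ) = μ ^ d := hmm
    have hXpow0 : (0 : ℝ) ≤ X ^ (d - 1) := by positivity
    have hXd1 : (1 : ℝ) ≤ X ^ (d - 1) := by linarith
    have hD : 1 ≤ μ * X ^ (d - 1) := by nlinarith [hμ1, hXd1]
    have h6 : (r : ℝ) * X ≤ (r : ℝ) * X ^ (d - 1) :=
      mul_le_mul_of_nonneg_left hXpow (by linarith)
    have hA2 : 2 * (r : ℝ) * (X ^ (d - 1) + X) ≤ 4 * (r : ℝ) * X ^ (d - 1) := by linarith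
    have hB : 4 * (r : ℝ) * X ^ (d - 1) ≤ (X - 4 * μ) * X ^ (d - 1) := by
      have : 4 * (r : ℝ) ≤ X - 4 * μ := by rw [hX]; linarith
      exact mul_le_mul_of_nonneg_right this hXpow0
    have h5 : μ * (4 * μ ^ (d - 1)) ≤ μ * X ^ (d - 1) :=
      mul_le_mul_of_nonneg_left hμpow hμ0
    have hC : 2 * (μ ^ d) ≤ (1 / 2) * (μ * X ^ (d - 1)) := by
      rw [hμd]; nlinarith [h5]
    have expand : (X - 4 * μ) * X ^ (d - 1) = X * X ^ (d - 1) - 4 * (μ * X ^ (d - 1)) := by ring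
    rw [hmm']
    have hB' := hB.trans_eq expand
    linarith [hA2, hB', hC, hD, hXd.le, hXd.ge]
  calc 2 * (m * m + ∑ k : Fin r, (n ^ (I k).card + n ^ (d - (I k).card)))
      = 2 * (m * m) + 2 * ∑ k : Fin r, (n ^ (I k).card + n ^ (d - (I k).card)) := by ring
    _ ≤ 2 * (m * m) + 2 * (r * (n ^ (d - 1) + n)) :=
        Nat.add_le_add_left (Nat.mul_le_mul_left 2 hA) _
    _ < n ^ d := hmain

section Core

open MvPolynomial

variable {F : Type*} [Field F] {σ Θ : Type*} [Fintype σ] [DecidableEq σ] [Fintype Θ]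

theorem bind₁_monomial_wbdd (Ψ : σ → MvPolynomial Θ F) (Wt : Θ → ℕ) (w D : ℕ)
    (hΨ : ∀ x, WBdd Wt w (Ψ x)) (μ : σ →₀ ℕ) (hμ : ∑ x, μ x ≤ D) :
    WBdd Wt (w * D) (MvPolynomial.bind₁ Ψ (monomial μ (1 : F))) := by
  classical
  rw [MvPolynomial.bind₁_monomial]
  have h1 : WBdd Wt (0 + ∑ x ∈ μ.support, μ x * w)
      (C (1 : F) * ∏ x ∈ μ.support, Ψ x ^ μ x) := by
    refine WBdd_mul (WBdd_C Wt 0 1) (WBdd_prod fun x _ => WBdd_pow (hΨ x) (μ x))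
  refine h1.mono ?_
  rw [Nat.zero_add]
  have h2 : ∑ x ∈ μ.support, μ x * w ≤ (∑ x, μ x) * w := by
    rw [Finset.sum_mul]
    exact Finset.sum_le_sum_of_subset (Finset.subset_univ _)
  calc ∑ x ∈ μ.support, μ x * w ≤ (∑ x, μ x) * w := h2
    _ ≤ D * w := Nat.mul_le_mul_right w hμ
    _ = w * D := Nat.mul_comm _ _

theorem exists_annihilating_poly
    (Ψ : σ → MvPolynomial Θ F) (W1 W2 W3 : Θ → ℕ) (w1 w2 w3 D : ℕ)
    (hΨ1 : ∀ x, WBdd W1 w1 (Ψ x)) (hΨ2 : ∀ x, WBdd W2 w2 (Ψ x))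
    (hΨ3 : ∀ x, WBdd W3 w3 (Ψ x))
    (ℬT : Type*) [Fintype ℬT]
    (recomb : ℬT → (Θ →₀ ℕ)) (split : (Θ →₀ ℕ) → ℬT)
    (hsplit : ∀ μ : Θ →₀ ℕ, wdeg W1 μ ≤ w1 * D → wdeg W2 μ ≤ w2 * D →
      wdeg W3 μ ≤ w3 * D → recomb (split μ) = μ)
    (hcard : Fintype.card ℬT < (D + Fintype.card σ).choose (Fintype.card σ)) :
    ∃ P : MvPolynomial σ F, P ≠ 0 ∧ P.totalDegree ≤ D ∧ MvPolynomial.bind₁ Ψ P = 0 := by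
  classical
  set V := {f : σ → ℕ // ∑ x, f x ≤ D} with hV
  -- the monomial attached to an element of V
  set mon : V → MvPolynomial σ F :=
    fun v => monomial (Finsupp.equivFunOnFinite.symm v.1) 1 with hmon
  set L : (V → F) →ₗ[F] MvPolynomial Θ F :=
    Fintype.linearCombination F (fun v : V => MvPolynomial.bind₁ Ψ (mon v)) with hL
  set Φ : MvPolynomial Θ F →ₗ[F] (ℬT → F) :=
    { toFun := fun p t => MvPolynomial.coeff (recomb t) p
      map_add' := fun p q => by funext t; simp [MvPolynomial.coeff_add]
      map_smul' := fun c p => by funext t; simp } with hΦ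
  have hLmem : ∀ c : V → F, ∀ i : Fin 3,
      WBdd ([W1, W2, W3].get i) (([w1, w2, w3].get i) * D) (L c) := by
    intro c i
    rw [hL, Fintype.linearCombination_apply]
    refine WBdd_sum fun v _ => WBdd_smul ?_
    have hv : ∑ x, (Finsupp.equivFunOnFinite.symm v.1) x ≤ D := v.2
    fin_cases i
    · exact bind₁_monomial_wbdd Ψ W1 w1 D hΨ1 _ hv
    · exact bind₁_monomial_wbdd Ψ W2 w2 D hΨ2 _ hv
    · exact bind₁_monomial_wbdd Ψ W3 w3 D hΨ3 _ hv
  have hnotinj : ¬ Function.Injective (Φ.comp L) := by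
    intro hinj
    have h1 : Module.finrank F (V → F) ≤ Module.finrank F (ℬT → F) :=
      LinearMap.finrank_le_finrank_of_injective hinj
    rw [Module.finrank_fintype_fun_eq_card, Module.finrank_fintype_fun_eq_card] at h1
    have h2 : Fintype.card V = (D + Fintype.card σ).choose (Fintype.card σ) := card_sumLe D
    omega
  rw [← LinearMap.ker_eq_bot] at hnotinj
  obtain ⟨c, hc, hc0⟩ := Submodule.exists_mem_ne_zero_of_ne_bot hnotinj
  refine ⟨∑ v : V, c v • mon v, ?_, ?_, ?_⟩
  · -- nonzero: some coordinate
    obtain ⟨v0, hv0⟩ : ∃ v0, c v0 ≠ 0 := by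
      by_contra h
      push_neg at h
      exact hc0 (funext fun v => h v)
    intro h0
    apply hv0
    have := congrArg (MvPolynomial.coeff (Finsupp.equivFunOnFinite.symm v0.1)) h0
    rw [MvPolynomial.coeff_sum] at this
    rw [Finset.sum_eq_single v0] at this
    · simpa [hmon, MvPolynomial.coeff_smul, MvPolynomial.coeff_monomial] using this
    · intro v _ hne
      have hne' : Finsupp.equivFunOnFinite.symm v.1 ≠ Finsupp.equivFunOnFinite.symm v0.1 :=
        fun h => hne (Subtype.ext (Finsupp.equivFunOnFinite.symm.injective h))
      simp [hmon, MvPolynomial.coeff_smul, MvPolynomial.coeff_monomial, hne']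
    · intro h
      exact absurd (Finset.mem_univ v0) h
  · -- total degree
    refine le_trans (MvPolynomial.totalDegree_finset_sum _ _) (Finset.sup_le fun v _ => ?_)
    refine le_trans (MvPolynomial.totalDegree_smul_le _ _) ?_
    refine le_trans (MvPolynomial.totalDegree_monomial_le _ _) ?_
    rw [Finsupp.sum_fintype _ _ (fun _ => rfl)]
    exact v.2
  · -- annihilation
    have hLc : MvPolynomial.bind₁ Ψ (∑ v : V, c v • mon v) = L c := by
      rw [hL, Fintype.linearCombination_apply, map_sum]
      congr 1
      funext v
      rw [map_smul]
    rw [hLc]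
    -- L c has support in the bounded box, and Φ (L c) = 0, so all coefficients vanish
    have hΦLc : Φ (L c) = 0 := hc
    ext μ
    rw [MvPolynomial.coeff_zero]
    by_cases hμ : μ ∈ (L c).support
    · have h1 := hLmem c 0 μ hμ
      have h2 := hLmem c 1 μ hμ
      have h3 := hLmem c 2 μ hμ
      simp only [List.get] at h1 h2 h3
      have hrec : recomb (split μ) = μ := hsplit μ h1 h2 h3
      have := congrFun hΦLc (split μ)
      rw [hΦ] at this
      simpa [hrec] using this
    · exact MvPolynomial.notMem_support_iff.mp hμ

end Core
section Specific

open MvPolynomial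

/-- The parameter variables: the matrix `g`, the free tensors `t₀,…,t_{m-2}`, and the
coordinates of the `aₖ` and `bₖ`. -/
abbrev PV (d m r n : ℕ) (I : Fin r → Finset (Fin d)) : Type :=
  (Fin m × Fin m) ⊕
    (({ℓ : Fin m // (ℓ : ℕ) < m - 1}) × (Fin d → Fin n)) ⊕
    (Σ k : Fin r, (({x : Fin d // x ∈ I k} → Fin n) ⊕ ({x : Fin d // x ∉ I k} → Fin n)))

variable {F : Type*} [CommSemiring F]

variable (d m r n : ℕ) (I : Fin r → Finset (Fin d))

def wtG : PV d m r n I → ℕ := fun x =>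
  match x with
  | Sum.inl _ => 1
  | Sum.inr _ => 0

def wtT : PV d m r n I → ℕ := fun x =>
  match x with
  | Sum.inr (Sum.inl _) => 1
  | _ => 0

def wtAB : PV d m r n I → ℕ := fun x =>
  match x with
  | Sum.inr (Sum.inr _) => 1
  | _ => 0

/-- The parametrization polynomial map. -/
noncomputable def PsiMap (F : Type*) [CommSemiring F] :
    ((Fin d → Fin n) × Fin m) → MvPolynomial (PV d m r n I) F :=
  fun p => ∑ ℓ : Fin m,
    X (Sum.inl (p.2, ℓ)) *
      (if h : (ℓ : ℕ) < m - 1 then X (Sum.inr (Sum.inl (⟨ℓ, h⟩, p.1)))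
       else ∑ k : Fin r,
         X (Sum.inr (Sum.inr ⟨k, Sum.inl (fun s => p.1 s.1)⟩)) *
         X (Sum.inr (Sum.inr ⟨k, Sum.inr (fun s => p.1 s.1)⟩)))

theorem psiMap_wbddG (p : (Fin d → Fin n) × Fin m) :
    WBdd (wtG d m r n I) 1 (PsiMap d m r n I F p) := by
  refine WBdd_sum fun ℓ _ => ?_
  have h1 : WBdd (wtG d m r n I) 1 (X (Sum.inl (p.2, ℓ)) : MvPolynomial (PV d m r n I) F) :=
    WBdd_X _ _
  by_cases h : (ℓ : ℕ) < m - 1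
  · rw [dif_pos h]
    simpa [wtG] using WBdd_mul h1 (WBdd_X (R := F) (wtG d m r n I) (Sum.inr (Sum.inl (⟨ℓ, h⟩, p.1))))
  · rw [dif_neg h]
    refine (WBdd_mul h1 (WBdd_sum (a := 0) fun k _ => ?_)).mono (by simp)
    simpa [wtG] using WBdd_mul (WBdd_X (R := F) (wtG d m r n I) (Sum.inr (Sum.inr ⟨k, Sum.inl fun s => p.1 s.1⟩)))
      (WBdd_X (R := F) (wtG d m r n I) (Sum.inr (Sum.inr ⟨k, Sum.inr fun s => p.1 s.1⟩)))

theorem psiMap_wbddT (p : (Fin d → Fin n) × Fin m) :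
    WBdd (wtT d m r n I) 1 (PsiMap d m r n I F p) := by
  refine WBdd_sum fun ℓ _ => ?_
  have h1 : WBdd (wtT d m r n I) 0 (X (Sum.inl (p.2, ℓ)) : MvPolynomial (PV d m r n I) F) := by
    simpa [wtT] using WBdd_X (R := F) (wtT d m r n I) (Sum.inl (p.2, ℓ))
  by_cases h : (ℓ : ℕ) < m - 1
  · rw [dif_pos h]
    have h2 := WBdd_X (R := F) (wtT d m r n I) (Sum.inr (Sum.inl (⟨ℓ, h⟩, p.1)))
    simpa [wtT] using WBdd_mul h1 h2
  · rw [dif_neg h]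
    refine (WBdd_mul h1 (WBdd_sum (a := 0) fun k _ => ?_)).mono (by simp)
    simpa [wtT] using WBdd_mul (WBdd_X (R := F) (wtT d m r n I) (Sum.inr (Sum.inr ⟨k, Sum.inl fun s => p.1 s.1⟩)))
      (WBdd_X (R := F) (wtT d m r n I) (Sum.inr (Sum.inr ⟨k, Sum.inr fun s => p.1 s.1⟩)))

theorem psiMap_wbddAB (p : (Fin d → Fin n) × Fin m) :
    WBdd (wtAB d m r n I) 2 (PsiMap d m r n I F p) := by
  refine WBdd_sum fun ℓ _ => ?_
  have h1 : WBdd (wtAB d m r n I) 0 (X (Sum.inl (p.2, ℓ)) : MvPolynomial (PV d m r n I) F) := by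
    simpa [wtAB] using WBdd_X (R := F) (wtAB d m r n I) (Sum.inl (p.2, ℓ))
  by_cases h : (ℓ : ℕ) < m - 1
  · rw [dif_pos h]
    have h2 : WBdd (wtAB d m r n I) 0
        (X (Sum.inr (Sum.inl (⟨ℓ, h⟩, p.1))) : MvPolynomial (PV d m r n I) F) := by
      simpa [wtAB] using WBdd_X (R := F) (wtAB d m r n I) (Sum.inr (Sum.inl (⟨ℓ, h⟩, p.1)))
    exact (WBdd_mul h1 h2).mono (by simp)
  · rw [dif_neg h]
    have h2 : WBdd (wtAB d m r n I) 2
        (∑ k : Fin r, (X (Sum.inr (Sum.inr ⟨k, Sum.inl fun s => p.1 s.1⟩)) *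
          X (Sum.inr (Sum.inr ⟨k, Sum.inr fun s => p.1 s.1⟩)) : MvPolynomial (PV d m r n I) F)) := by
      refine WBdd_sum fun k _ => ?_
      have := WBdd_mul (WBdd_X (R := F) (wtAB d m r n I) (Sum.inr (Sum.inr ⟨k, Sum.inl fun s => p.1 s.1⟩)))
        (WBdd_X (R := F) (wtAB d m r n I) (Sum.inr (Sum.inr ⟨k, Sum.inr fun s => p.1 s.1⟩)))
      simpa [wtAB] using this
    simpa using WBdd_mul h1 h2

theorem wdeg_wtG_eq (μ : PV d m r n I →₀ ℕ) :
    wdeg (wtG d m r n I) μ = ∑ x : Fin m × Fin m, μ (Sum.inl x) := by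
  rw [wdeg, Fintype.sum_sum_type]
  simp [wtG]

theorem wdeg_wtT_eq (μ : PV d m r n I →₀ ℕ) :
    wdeg (wtT d m r n I) μ =
      ∑ x : ({ℓ : Fin m // (ℓ : ℕ) < m - 1}) × (Fin d → Fin n), μ (Sum.inr (Sum.inl x)) := by
  rw [wdeg, Fintype.sum_sum_type, Fintype.sum_sum_type]
  simp [wtT]

theorem wdeg_wtAB_eq (μ : PV d m r n I →₀ ℕ) :
    wdeg (wtAB d m r n I) μ =
      ∑ x : (Σ k : Fin r, (({x : Fin d // x ∈ I k} → Fin n) ⊕ ({x : Fin d // x ∉ I k} → Fin n))),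
        μ (Sum.inr (Sum.inr x)) := by
  rw [wdeg, Fintype.sum_sum_type, Fintype.sum_sum_type]
  simp [wtAB]

end Specific
section Specific2

open MvPolynomial

variable (d m r n : ℕ) (I : Fin r → Finset (Fin d))

/-- The target box of monomials. -/
abbrev BT (D : ℕ) : Type :=
  {f : (Fin m × Fin m) → ℕ // ∑ x, f x ≤ D} ×
  {f : (({ℓ : Fin m // (ℓ : ℕ) < m - 1}) × (Fin d → Fin n)) → ℕ // ∑ x, f x ≤ D} ×
  {f : (Σ k : Fin r, (({x : Fin d // x ∈ I k} → Fin n) ⊕ ({x : Fin d // x ∉ I k} → Fin n))) → ℕ //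
    ∑ x, f x ≤ 2 * D}

noncomputable def splitPV (D : ℕ) (μ : PV d m r n I →₀ ℕ) : BT d m r n I D :=
  if h : wdeg (wtG d m r n I) μ ≤ 1 * D ∧ wdeg (wtT d m r n I) μ ≤ 1 * D ∧
      wdeg (wtAB d m r n I) μ ≤ 2 * D then
    (⟨fun x => μ (Sum.inl x), by
        rw [← wdeg_wtG_eq]; simpa using h.1⟩,
     ⟨fun x => μ (Sum.inr (Sum.inl x)), by
        rw [← wdeg_wtT_eq]; simpa using h.2.1⟩,
     ⟨fun x => μ (Sum.inr (Sum.inr x)), by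
        rw [← wdeg_wtAB_eq]; exact h.2.2⟩)
  else
    (⟨fun _ => 0, by simp⟩, ⟨fun _ => 0, by simp⟩, ⟨fun _ => 0, by simp⟩)

noncomputable def recombPV (D : ℕ) (b : BT d m r n I D) : PV d m r n I →₀ ℕ :=
  Finsupp.equivFunOnFinite.symm
    (fun x => match x with
      | Sum.inl g => b.1.1 g
      | Sum.inr (Sum.inl t) => b.2.1.1 t
      | Sum.inr (Sum.inr s) => b.2.2.1 s)

theorem recomb_splitPV (D : ℕ) (μ : PV d m r n I →₀ ℕ)
    (h1 : wdeg (wtG d m r n I) μ ≤ 1 * D) (h2 : wdeg (wtT d m r n I) μ ≤ 1 * D)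
    (h3 : wdeg (wtAB d m r n I) μ ≤ 2 * D) :
    recombPV d m r n I D (splitPV d m r n I D μ) = μ := by
  rw [splitPV, dif_pos ⟨h1, h2, h3⟩, recombPV]
  have : (fun x : PV d m r n I => match x with
      | Sum.inl g => μ (Sum.inl g)
      | Sum.inr (Sum.inl t) => μ (Sum.inr (Sum.inl t))
      | Sum.inr (Sum.inr s) => μ (Sum.inr (Sum.inr s))) = ⇑μ := by
    funext x
    rcases x with g | t | s <;> rfl
  rw [this]
  exact Finsupp.equivFunOnFinite.symm_apply_apply μ

def finLtEquiv (m : ℕ) : {ℓ : Fin m // (ℓ : ℕ) < m - 1} ≃ Fin (m - 1) where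
  toFun ℓ := ⟨ℓ.1.1, ℓ.2⟩
  invFun j := ⟨⟨j.1, lt_of_lt_of_le j.2 (Nat.sub_le m 1)⟩, j.2⟩
  left_inv ℓ := Subtype.ext (Fin.ext rfl)
  right_inv j := rfl

theorem card_BT (D : ℕ) :
    Fintype.card (BT d m r n I D) =
      (D + m * m).choose (m * m) *
        ((D + (m - 1) * n ^ d).choose ((m - 1) * n ^ d) *
          (2 * D + ∑ k : Fin r, (n ^ (I k).card + n ^ (d - (I k).card))).choose
            (∑ k : Fin r, (n ^ (I k).card + n ^ (d - (I k).card)))) := by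
  classical
  rw [Fintype.card_prod, Fintype.card_prod]
  congr 1
  · rw [card_sumLe]
    congr 2 <;> simp
  congr 1
  · rw [card_sumLe]
    have hc : Fintype.card (({ℓ : Fin m // (ℓ : ℕ) < m - 1}) × (Fin d → Fin n)) =
        (m - 1) * n ^ d := by
      rw [Fintype.card_prod, Fintype.card_congr (finLtEquiv m)]
      simp [Fintype.card_fun]
    rw [hc]
  · rw [card_sumLe]
    have hc : Fintype.card
        (Σ k : Fin r, (({x : Fin d // x ∈ I k} → Fin n) ⊕ ({x : Fin d // x ∉ I k} → Fin n))) =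
        ∑ k : Fin r, (n ^ (I k).card + n ^ (d - (I k).card)) := by
      rw [Fintype.card_sigma]
      refine Finset.sum_congr rfl fun k _ => ?_
      have e1 : Fintype.card {x : Fin d // x ∈ I k} = (I k).card := Fintype.card_coe _
      have e2 : Fintype.card {x : Fin d // x ∉ I k} = d - (I k).card := by
        rw [Fintype.card_subtype_compl, e1, Fintype.card_fin]
      rw [Fintype.card_sum, Fintype.card_fun, Fintype.card_fun, e1, e2, Fintype.card_fin]
    rw [hc]

end Specific2

section TensorLemmas

variable (F : Type*) [Field F] {d : ℕ} (W : Fin d → Type*)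
  [∀ i, AddCommGroup (W i)] [∀ i, Module F (W i)]

theorem partMul_tprod (I : Finset (Fin d)) (v : ∀ i : {x : Fin d // x ∈ I}, W i)
    (w : ∀ i : {x : Fin d // x ∉ I}, W i) :
    partMul F W I (tprod F v) (tprod F w) = tprod F (combineVec W I v w) := by
  simp [partMul, partMulOuter, partMulInner, PiTensorProduct.lift.tprod]

theorem stdCoord_tprod (d n : ℕ) (w : Fin d → Fin n) (f : Fin d → (Fin n → F)) :
    stdCoord F d n w (tprod F f) = ∏ i, f i (w i) := by
  simp [stdCoord]

theorem exists_repr {ι : Type*} [Fintype ι] [DecidableEq ι] (n : ℕ)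
    (x : ⨂[F] _ : ι, (Fin n → F)) :
    ∃ α : (ι → Fin n) → F,
      x = ∑ u : ι → Fin n, α u • PiTensorProduct.tprod F (fun i => Pi.single (u i) (1 : F)) := by
  induction x using PiTensorProduct.induction_on with
  | smul_tprod c f =>
    refine ⟨fun u => c * ∏ i, f i (u i), ?_⟩
    have hf : (fun i => ∑ j : Fin n, f i j • (Pi.single j (1 : F) : Fin n → F)) = f := by
      funext i x
      simp [Pi.single_apply]
    calc c • tprod F f = c • tprod F (fun i => ∑ j : Fin n, f i j • (Pi.single j (1 : F) : Fin n → F)) := by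
          rw [hf]
      _ = ∑ u : ι → Fin n, (c * ∏ i, f i (u i)) • PiTensorProduct.tprod F (fun i => Pi.single (u i) (1 : F)) := by
          rw [MultilinearMap.map_sum]
          rw [Finset.smul_sum]
          congr 1
          funext u
          rw [MultilinearMap.map_smul_univ]
          rw [smul_smul]
  | add x y hx hy =>
    obtain ⟨a, ha⟩ := hx
    obtain ⟨b, hb⟩ := hy
    exact ⟨a + b, by simp [ha, hb, add_smul, Finset.sum_add_distrib]⟩

end TensorLemmas

section StdPartMul

variable (F : Type*) [Field F]

theorem stdCoord_partMul_single (d n : ℕ) (I : Finset (Fin d)) (w : Fin d → Fin n)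
    (u : {x : Fin d // x ∈ I} → Fin n) (v : {x : Fin d // x ∉ I} → Fin n) :
    stdCoord F d n w (partMul F (fun _ : Fin d => Fin n → F) I
        (tprod F (fun i => (Pi.single (u i) (1 : F) : Fin n → F)))
        (tprod F (fun i => (Pi.single (v i) (1 : F) : Fin n → F))))
      = (if u = (fun i => w i.1) then (1 : F) else 0) *
        (if v = (fun i => w i.1) then (1 : F) else 0) := by
  rw [partMul_tprod, stdCoord_tprod]
  have hterm : ∀ i : Fin d,
      combineVec (fun _ : Fin d => Fin n → F) I
          (fun i => (Pi.single (u i) (1 : F) : Fin n → F))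
          (fun i => (Pi.single (v i) (1 : F) : Fin n → F)) i (w i)
        = if (if h : i ∈ I then u ⟨i, h⟩ = w i else v ⟨i, h⟩ = w i) then (1 : F) else 0 := by
    intro i
    by_cases h : i ∈ I
    · simp [combineVec, h, Pi.single_apply, eq_comm]
    · simp [combineVec, h, Pi.single_apply, eq_comm]
  rw [Finset.prod_congr rfl (fun i _ => hterm i)]
  rw [Finset.prod_boole]
  by_cases hu : u = fun i => w i.1
  · by_cases hv : v = fun i => w i.1
    · rw [if_pos, if_pos hu, if_pos hv, one_mul]
      intro i _
      by_cases h : i ∈ I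
      · simp only [dif_pos h]
        exact congrFun hu ⟨i, h⟩
      · simp only [dif_neg h]
        exact congrFun hv ⟨i, h⟩
    · rw [if_neg, if_neg hv, mul_zero]
      intro hall
      apply hv
      funext i
      have := hall i.1 (Finset.mem_univ _)
      rw [dif_neg i.2] at this
      exact this
  · rw [if_neg, if_neg hu, zero_mul]
    intro hall
    apply hu
    funext i
    have := hall i.1 (Finset.mem_univ _)
    rw [dif_pos i.2] at this
    exact this

theorem stdCoord_partMul (d n : ℕ) (I : Finset (Fin d)) (w : Fin d → Fin n)
    (α : ({x : Fin d // x ∈ I} → Fin n) → F) (β : ({x : Fin d // x ∉ I} → Fin n) → F) :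
    stdCoord F d n w (partMul F (fun _ : Fin d => Fin n → F) I
        (∑ u, α u • tprod F (fun i => (Pi.single (u i) (1 : F) : Fin n → F)))
        (∑ v, β v • tprod F (fun i => (Pi.single (v i) (1 : F) : Fin n → F))))
      = α (fun i => w i.1) * β (fun i => w i.1) := by
  simp only [map_sum, map_smul, LinearMap.sum_apply, LinearMap.smul_apply, smul_eq_mul,
    stdCoord_partMul_single]
  simp [mul_ite, ite_mul, mul_zero, zero_mul, mul_one, one_mul, Finset.sum_ite_eq',
    Finset.mul_sum, mul_comm]

end StdPartMul

section EvalSection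

open MvPolynomial

variable {Kbar : Type*} [Field Kbar]

/-- The assignment of values to the parameter variables. -/
noncomputable def vAssign (d m r n : ℕ) (I : Fin r → Finset (Fin d))
    (g : Fin m → Fin m → Kbar) (t : Fin m → ⨂[Kbar] _ : Fin d, (Fin n → Kbar))
    (α : ∀ k : Fin r, ({x : Fin d // x ∈ I k} → Fin n) → Kbar)
    (β : ∀ k : Fin r, ({x : Fin d // x ∉ I k} → Fin n) → Kbar) :
    PV d m r n I → Kbar := fun x =>
  match x with
  | Sum.inl (j, ℓ) => g j ℓ
  | Sum.inr (Sum.inl (ℓ, w)) => stdCoord Kbar d n w (t ℓ.1)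
  | Sum.inr (Sum.inr ⟨k, Sum.inl u⟩) => α k u
  | Sum.inr (Sum.inr ⟨k, Sum.inr v⟩) => β k v

theorem eval_psiMap (d m r n : ℕ) (hm : 1 ≤ m) (I : Fin r → Finset (Fin d))
    (g : Fin m → Fin m → Kbar) (t : Fin m → ⨂[Kbar] _ : Fin d, (Fin n → Kbar))
    (α : ∀ k : Fin r, ({x : Fin d // x ∈ I k} → Fin n) → Kbar)
    (β : ∀ k : Fin r, ({x : Fin d // x ∉ I k} → Fin n) → Kbar)
    (hlast : ∀ w : Fin d → Fin n,
      stdCoord Kbar d n w (t ⟨m - 1, by omega⟩) =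
        ∑ k : Fin r, α k (fun i => w i.1) * β k (fun i => w i.1))
    (p : (Fin d → Fin n) × Fin m) :
    eval₂ ((⊥ : Subfield Kbar).subtype) (vAssign d m r n I g t α β)
        (PsiMap d m r n I (⊥ : Subfield Kbar) p) =
      stdCoord Kbar d n p.1 (∑ ℓ, g p.2 ℓ • t ℓ) := by
  have hrhs : stdCoord Kbar d n p.1 (∑ ℓ, g p.2 ℓ • t ℓ) =
      ∑ ℓ, g p.2 ℓ * stdCoord Kbar d n p.1 (t ℓ) := by
    rw [map_sum]
    refine Finset.sum_congr rfl fun ℓ _ => ?_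
    rw [map_smul, smul_eq_mul]
  rw [hrhs, PsiMap, eval₂_sum]
  refine Finset.sum_congr rfl fun ℓ _ => ?_
  rw [eval₂_mul, eval₂_X]
  by_cases h : (ℓ : ℕ) < m - 1
  · rw [dif_pos h, eval₂_X]
    rfl
  · rw [dif_neg h]
    have hℓ : ℓ = (⟨m - 1, by omega⟩ : Fin m) := by
      have := ℓ.2
      apply Fin.ext
      simp only []
      omega
    rw [eval₂_sum]
    have hsum : ∑ k : Fin r,
        eval₂ ((⊥ : Subfield Kbar).subtype) (vAssign d m r n I g t α β)
          (X (Sum.inr (Sum.inr ⟨k, Sum.inl fun s => p.1 s.1⟩)) *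
           X (Sum.inr (Sum.inr ⟨k, Sum.inr fun s => p.1 s.1⟩))) =
        ∑ k : Fin r, α k (fun i => p.1 i.1) * β k (fun i => p.1 i.1) := by
      refine Finset.sum_congr rfl fun k _ => ?_
      rw [eval₂_mul, eval₂_X, eval₂_X]
      rfl
    rw [hsum, ← hlast p.1, hℓ]
    rfl

end EvalSection

set_option maxHeartbeats 1600000 in
/-- Fix `d ≥ 2`. There exist constants `C(d)` and `r₀(d)` such that: for
every algebraically closed field `K̄`, `m ≥ 1`, `r ≥ r₀(d)`, with
`n := ⌈4(r + m^{2/d})⌉`, and every choice of proper nonempty subsets `I₁,…,I_r` of `[d]`,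
there is a nonzero polynomial `F` in the standard coordinates on `((K̄ⁿ)^{⊗d})^m`, with
coefficients in the prime field and `log₂ (deg F) ≤ C(d)·log₂(r+m)`, vanishing at every
tuple `g·(t₁,…,t_{m-1}, Σ_{i=1}^r a_i ⊗ b_i)` with `g ∈ K̄^{m×m}`,
`a_i ∈ (K̄ⁿ)^{⊗I_i}`, `b_i ∈ (K̄ⁿ)^{⊗I_i^c}`. -/
theorem exists_low_degree_equation_for_parametrization (d : ℕ) (hd : 2 ≤ d) :
    ∃ (C : ℝ) (r₀ : ℕ), 0 < C ∧
      ∀ (Kbar : Type*) [Field Kbar] [IsAlgClosed Kbar]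
        (m r : ℕ) (hm : 1 ≤ m) (hr : r₀ ≤ r) (n : ℕ),
        n = ⌈4 * ((r : ℝ) + (m : ℝ) ^ ((2 : ℝ) / (d : ℝ)))⌉₊ →
        ∀ I : Fin r → Finset (Fin d), (∀ k, (I k).Nonempty ∧ I k ≠ Finset.univ) →
          ∃ P : MvPolynomial ((Fin d → Fin n) × Fin m) Kbar, P ≠ 0 ∧
            (∀ mo : ((Fin d → Fin n) × Fin m) →₀ ℕ,
              MvPolynomial.coeff mo P ∈ (⊥ : Subfield Kbar)) ∧
            Real.logb 2 (P.totalDegree : ℝ) ≤ C * Real.logb 2 ((r : ℝ) + (m : ℝ)) ∧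
            ∀ (g : Fin m → Fin m → Kbar)
              (t : Fin m → ⨂[Kbar] _ : Fin d, (Fin n → Kbar))
              (a : ∀ k : Fin r, ⨂[Kbar] i : {x : Fin d // x ∈ I k}, (Fin n → Kbar))
              (b : ∀ k : Fin r, ⨂[Kbar] i : {x : Fin d // x ∉ I k}, (Fin n → Kbar)),
              t ⟨m - 1, by omega⟩ =
                  ∑ k, partMul Kbar (fun _ : Fin d => Fin n → Kbar) (I k) (a k) (b k) →
                MvPolynomial.eval
                  (fun p => stdCoord Kbar d n p.1 (∑ ℓ, g p.2 ℓ • t ℓ)) P = 0 := by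
  classical
  refine ⟨(2 * (d : ℝ) + 3 : ℝ), 3 * 5 ^ (2 * d) + 1, by positivity, ?_⟩
  intro Kbar _ _ m r hm hr n hn I hI
  have hr1 : 1 ≤ r := le_trans (Nat.le_add_left 1 _) hr
  have hdR : (0 : ℝ) < (d : ℝ) := by positivity
  have hnR : 4 * ((r : ℝ) + (m : ℝ) ^ ((2 : ℝ) / (d : ℝ))) ≤ (n : ℝ) := by
    rw [hn]; exact Nat.le_ceil _
  have hμ0 : (0 : ℝ) ≤ (m : ℝ) ^ ((2 : ℝ) / (d : ℝ)) :=
    Real.rpow_nonneg (Nat.cast_nonneg m) _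
  have hrRe : (1 : ℝ) ≤ (r : ℝ) := by exact_mod_cast hr1
  have hn4 : 4 ≤ n := by
    have : (4 : ℝ) ≤ (n : ℝ) := by linarith
    exact_mod_cast this
  have hgeom := geom_ineq d m r n hd hm hr1 hnR I hI
  set A := ∑ k : Fin r, (n ^ (I k).card + n ^ (d - (I k).card)) with hA
  set S := n ^ d * m with hS
  have hS1 : 1 ≤ S := by
    have h1 : 1 ≤ n ^ d := Nat.one_le_pow _ _ (by omega)
    calc 1 = 1 * 1 := rfl
      _ ≤ n ^ d * m := Nat.mul_le_mul h1 hm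
  set D := 3 * S ^ 2 with hD
  have hqsum : S = (m - 1) * n ^ d + n ^ d := by
    have hm' : m - 1 + 1 = m := by omega
    calc S = n ^ d * m := hS
      _ = n ^ d * (m - 1 + 1) := by rw [hm']
      _ = (m - 1) * n ^ d + n ^ d := by ring
  have hcount := main_count S (n ^ d) ((m - 1) * n ^ d) (m * m) A hqsum
    (by omega) hS1
  have hcardσ : Fintype.card ((Fin d → Fin n) × Fin m) = S := by
    rw [Fintype.card_prod, Fintype.card_fun]
    simp [hS]
  have hcardBT : Fintype.card (BT d m r n I D) <
      (D + Fintype.card ((Fin d → Fin n) × Fin m)).choose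
        (Fintype.card ((Fin d → Fin n) × Fin m)) := by
    rw [card_BT, hcardσ, hD]
    exact hcount
  obtain ⟨P, hP0, hPdeg, hPann⟩ := exists_annihilating_poly
    (PsiMap d m r n I (⊥ : Subfield Kbar)) (wtG d m r n I) (wtT d m r n I) (wtAB d m r n I)
    1 1 2 D (fun p => psiMap_wbddG d m r n I p) (fun p => psiMap_wbddT d m r n I p)
    (fun p => psiMap_wbddAB d m r n I p)
    (BT d m r n I D) (recombPV d m r n I D) (splitPV d m r n I D)
    (fun μ h1 h2 h3 => recomb_splitPV d m r n I D μ h1 h2 (by simpa using h3)) hcardBT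
  set φ : (⊥ : Subfield Kbar) →+* Kbar := (⊥ : Subfield Kbar).subtype with hφ
  refine ⟨MvPolynomial.map φ P, ?_, ?_, ?_, ?_⟩
  · -- nonzero
    intro h0
    exact hP0 (MvPolynomial.map_injective φ (RingHom.injective φ)
      (by rw [h0, map_zero]))
  · -- coefficients in the prime field
    intro mo
    rw [MvPolynomial.coeff_map]
    exact SetLike.coe_mem _
  · -- degree bound
    have hdeg2 : (MvPolynomial.map φ P).totalDegree ≤ D :=
      le_trans (Finset.sup_mono (MvPolynomial.support_map_subset _ _)) hPdeg
    have hn5 : n ≤ 5 * (r + m) := by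
      rw [hn, Nat.ceil_le]
      have hμm : (m : ℝ) ^ ((2 : ℝ) / (d : ℝ)) ≤ (m : ℝ) := by
        calc (m : ℝ) ^ ((2 : ℝ) / (d : ℝ)) ≤ (m : ℝ) ^ ((1 : ℝ)) := by
              apply Real.rpow_le_rpow_of_exponent_le (by exact_mod_cast hm)
              rw [div_le_one hdR]
              exact_mod_cast hd
          _ = (m : ℝ) := Real.rpow_one _
      push_cast
      have hmRe : (1 : ℝ) ≤ (m : ℝ) := by exact_mod_cast hm
      linarith
    have h35 : 3 * 5 ^ (2 * d) ≤ r + m := by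
      have : 3 * 5 ^ (2 * d) + 1 ≤ r := hr
      omega
    have hDb : D ≤ (r + m) ^ (2 * d + 3) := by
      have h1 : S ≤ 5 ^ d * (r + m) ^ (d + 1) := by
        calc S = n ^ d * m := hS
          _ ≤ (5 * (r + m)) ^ d * (r + m) :=
              Nat.mul_le_mul (Nat.pow_le_pow_left hn5 d) (Nat.le_add_left m r)
          _ = 5 ^ d * (r + m) ^ d * (r + m) := by rw [mul_pow]
          _ = 5 ^ d * (r + m) ^ (d + 1) := by rw [pow_succ]; ring
      have h2 : S ^ 2 ≤ 5 ^ (2 * d) * (r + m) ^ (2 * d + 2) := by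
        calc S ^ 2 ≤ (5 ^ d * (r + m) ^ (d + 1)) ^ 2 := Nat.pow_le_pow_left h1 2
          _ = 5 ^ (d * 2) * (r + m) ^ ((d + 1) * 2) := by
              rw [mul_pow, ← pow_mul, ← pow_mul]
          _ = 5 ^ (2 * d) * (r + m) ^ (2 * d + 2) := by
              congr 1
              · congr 1; ring
              · congr 1; ring
      calc D = 3 * S ^ 2 := hD
        _ ≤ 3 * (5 ^ (2 * d) * (r + m) ^ (2 * d + 2)) := Nat.mul_le_mul_left 3 h2
        _ = (3 * 5 ^ (2 * d)) * (r + m) ^ (2 * d + 2) := by ring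
        _ ≤ (r + m) * (r + m) ^ (2 * d + 2) := Nat.mul_le_mul_right _ h35
        _ = (r + m) ^ (2 * d + 3) := by rw [pow_succ]; ring
    have hrm1 : (1 : ℝ) ≤ (r : ℝ) + (m : ℝ) := by
      have : (1 : ℝ) ≤ (r : ℝ) := hrRe
      have hm0 : (0 : ℝ) ≤ (m : ℝ) := Nat.cast_nonneg m
      linarith
    by_cases h0 : (MvPolynomial.map φ P).totalDegree = 0
    · rw [h0]
      simp only [Nat.cast_zero, Real.logb_zero]
      exact mul_nonneg (by positivity) (Real.logb_nonneg (by norm_num) hrm1)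
    · have h1D : (1 : ℝ) ≤ ((MvPolynomial.map φ P).totalDegree : ℝ) := by
        exact_mod_cast Nat.one_le_iff_ne_zero.mpr h0
      have hle : ((MvPolynomial.map φ P).totalDegree : ℝ) ≤ (((r + m) ^ (2 * d + 3) : ℕ) : ℝ) := by
        exact_mod_cast le_trans hdeg2 hDb
      calc Real.logb 2 ((MvPolynomial.map φ P).totalDegree : ℝ)
          ≤ Real.logb 2 ((((r + m) ^ (2 * d + 3) : ℕ)) : ℝ) :=
            Real.logb_le_logb_of_le (by norm_num) (by linarith) hle
        _ = (2 * (d : ℝ) + 3) * Real.logb 2 ((r : ℝ) + (m : ℝ)) := by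
            push_cast
            rw [Real.logb_pow]
            push_cast
            ring
  · -- vanishing
    intro g t a b hlast_eq
    choose α hα using fun k => exists_repr Kbar n (a k)
    choose β hβ using fun k => exists_repr Kbar n (b k)
    have hlast : ∀ w : Fin d → Fin n,
        stdCoord Kbar d n w (t ⟨m - 1, by omega⟩) =
          ∑ k : Fin r, α k (fun i => w i.1) * β k (fun i => w i.1) := by
      intro w
      rw [hlast_eq, map_sum]
      refine Finset.sum_congr rfl fun k _ => ?_
      rw [hα k, hβ k]
      exact stdCoord_partMul Kbar d n (I k) w (α k) (β k)
    have key := MvPolynomial.hom_bind₁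
      (MvPolynomial.eval₂Hom φ (vAssign d m r n I g t α β))
      (PsiMap d m r n I (⊥ : Subfield Kbar)) P
    rw [hPann, map_zero, MvPolynomial.eval₂Hom_comp_C] at key
    rw [MvPolynomial.eval_map]
    have hpoint : (fun p : (Fin d → Fin n) × Fin m =>
        stdCoord Kbar d n p.1 (∑ ℓ, g p.2 ℓ • t ℓ)) =
        fun i => (MvPolynomial.eval₂Hom φ (vAssign d m r n I g t α β))
          (PsiMap d m r n I (⊥ : Subfield Kbar) i) := by
      funext p
      exact (eval_psiMap d m r n hm I g t α β hlast p).symm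
    rw [hpoint]
    exact key.symm
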